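/- Let p(z) = Σ_{k=0}^d a_k z^k be a real-rooted polynomial with non-negative real coefficients, and let 0 ≤ r ≤ d be an integer. Then a_r ≥ C(d,r) · (r/d)^r · ((d-r)/d)^{d-r} · inf_{t>0} p(t)/t^r. -/

import Mathlib

open Polynomial

namespace Stmt6Aux

/-- A real polynomial all of whose complex roots are real splits over ℝ. -/
lemma splits_of_complex_roots_real :
    ∀ (N : ℕ) (p : ℝ[X]), p.natDegree ≤ N → (∀ z : ℂ, Polynomial.aeval z p = 0 → z.im = 0) →
      p.Splits := by
  intro N
  induction N with
  | zero => intro p hp _; exact Splits.of_natDegree_le_one (hp.trans (by norm_num))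
  | succ N ih =>
    intro p hp hroots
    by_cases h1 : p.natDegree ≤ 1
    · exact Splits.of_natDegree_le_one h1
    have hp0 : p ≠ 0 := fun h => by simp [h] at h1
    -- find a complex root
    have hd : 0 < (p.map (algebraMap ℝ ℂ)).degree := by
      rw [degree_map, degree_eq_natDegree hp0]
      exact_mod_cast Nat.pos_of_ne_zero (fun h => h1 (by omega))
    obtain ⟨z, hz⟩ := Complex.exists_root hd
    have hz' : Polynomial.aeval z p = 0 := by
      rw [aeval_def, ← eval_map]; exact hz
    have him := hroots z hz'
    set x : ℝ := z.re with hx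
    have hzx : z = (x : ℂ) := Complex.ext rfl (by simp [him])
    have hroot : p.IsRoot x := by
      have : Polynomial.aeval ((x : ℂ)) p = 0 := hzx ▸ hz'
      have h2 : ((p.eval x : ℝ) : ℂ) = 0 := by
        rw [show ((x:ℝ):ℂ) = algebraMap ℝ ℂ x from rfl, Polynomial.aeval_algebraMap_apply] at this
        simpa using this
      exact_mod_cast h2
    -- factor
    have hfac : (X - C x) * (p / (X - C x)) = p := (mul_div_eq_iff_isRoot).2 hroot
    set q := p / (X - C x) with hq
    have hq0 : q ≠ 0 := by
      intro h; rw [h, mul_zero] at hfac; exact hp0 hfac.symm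
    have hdq : q.natDegree ≤ N := by
      have := natDegree_mul (X_sub_C_ne_zero x) hq0
      rw [hfac, natDegree_X_sub_C] at this
      omega
    have hqroots : ∀ z : ℂ, Polynomial.aeval z q = 0 → z.im = 0 := by
      intro w hw
      apply hroots w
      rw [← hfac]
      simp [hw]
    have hsq := ih q hdq hqroots
    rw [← hfac]
    exact Splits.mul (Splits.of_natDegree_le_one (by simp [natDegree_X_sub_C])) hsq

lemma splits_derivative (p : ℝ[X]) (h : p.Splits) :
    p.derivative.Splits := by
  by_cases hd : p.natDegree = 0
  · rw [derivative_of_natDegree_zero hd]; exact Splits.zero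
  rw [splits_iff_card_roots] at h ⊢
  have h1 := p.card_roots_le_derivative
  have h2 := p.derivative.card_roots'
  have h3 := p.natDegree_derivative_le
  omega

lemma natDegree_derivative_eq' (p : ℝ[X]) (hd : p.natDegree ≠ 0) :
    p.derivative.natDegree = p.natDegree - 1 := by
  refine le_antisymm p.natDegree_derivative_le ?_
  apply le_natDegree_of_ne_zero
  obtain ⟨n, hn⟩ : ∃ n, p.natDegree = n + 1 := ⟨p.natDegree - 1, by omega⟩
  rw [hn]
  simp only [Nat.add_sub_cancel, coeff_derivative]
  have hc : p.coeff (n + 1) ≠ 0 := by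
    rw [← hn, ← leadingCoeff]
    exact leadingCoeff_ne_zero.mpr (fun h => hd (by simp [h]))
  exact mul_ne_zero hc (by positivity)

lemma splits_iterate_derivative (p : ℝ[X]) (h : p.Splits) (k : ℕ) :
    (derivative^[k] p).Splits := by
  induction k with
  | zero => exact h
  | succ k ih => rw [Function.iterate_succ_apply']; exact splits_derivative _ ih

lemma natDegree_iterate_derivative_eq (p : ℝ[X]) :
    ∀ k, k ≤ p.natDegree → (derivative^[k] p).natDegree = p.natDegree - k := by
  intro k
  induction k with
  | zero => simp
  | succ k ih =>
    intro hk
    rw [Function.iterate_succ_apply', natDegree_derivative_eq' _ (by rw [ih (by omega)]; omega),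
      ih (by omega)]
    omega

lemma splits_reverse (p : ℝ[X]) (h : p.Splits) :
    p.reverse.Splits := by
  by_cases hp0 : p = 0
  · rw [hp0]
    exact Splits.of_natDegree_le_one ((reverse_natDegree_le _).trans (by simp))
  have hfac := h.eq_prod_roots
  rw [hfac, reverse_mul_of_domain]
  apply Splits.mul
  · rw [reverse_C]; exact Splits.C _
  · generalize p.roots = s
    induction s using Multiset.induction with
    | empty =>
      simp only [Multiset.map_zero, Multiset.prod_zero]
      exact Splits.of_natDegree_le_one ((reverse_natDegree_le _).trans (by simp))
    | cons a s ih =>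
      rw [Multiset.map_cons, Multiset.prod_cons, reverse_mul_of_domain]
      exact Splits.mul (Splits.of_natDegree_le_one
        ((reverse_natDegree_le _).trans (by simp [natDegree_X_sub_C]))) ih

lemma discrim_of_splits (s : ℝ[X]) (hs : s.Splits) (h2 : s.natDegree ≤ 2) :
    4 * (s.coeff 2 * s.coeff 0) ≤ (s.coeff 1) ^ 2 := by
  by_cases hd : s.natDegree ≤ 1
  · rw [coeff_eq_zero_of_natDegree_lt (by omega)]
    have := sq_nonneg (s.coeff 1)
    nlinarith
  · have hd2 : s.natDegree = 2 := by omega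
    have hcard := (splits_iff_card_roots).1 hs
    rw [hd2] at hcard
    obtain ⟨u, v, huv⟩ := Multiset.card_eq_two.1 hcard
    have hfac := hs.eq_prod_roots
    rw [huv] at hfac
    set a := s.leadingCoeff with ha
    have e : s = C a * X ^ 2 - C (a * (u + v)) * X + C (a * (u * v)) := by
      rw [hfac]
      simp only [Multiset.insert_eq_cons, Multiset.map_cons, Multiset.map_singleton,
        Multiset.prod_cons, Multiset.prod_singleton, C_mul, C_add]
      ring
    have c2 : s.coeff 2 = a := by
      rw [e]; simp [coeff_X]
    have c1 : s.coeff 1 = -(a * (u + v)) := by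
      rw [e]; simp [coeff_X]
    have c0 : s.coeff 0 = a * (u * v) := by
      rw [e]; simp [coeff_X]
    rw [c2, c1, c0]
    nlinarith [sq_nonneg (a * (u - v))]

lemma newton (f : ℝ[X]) (hs : f.Splits) (k : ℕ) (hk : k + 2 ≤ f.natDegree) :
    ((k : ℝ) + 2) * ((f.natDegree : ℝ) - k) * (f.coeff k * f.coeff (k + 2))
      ≤ ((k : ℝ) + 1) * ((f.natDegree : ℝ) - k - 1) * (f.coeff (k + 1)) ^ 2 := by
  set n := f.natDegree with hn
  set g := derivative^[k] f with hg
  have hgs : g.Splits := splits_iterate_derivative f hs k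
  have hgd : g.natDegree = n - k := natDegree_iterate_derivative_eq f k (by omega)
  obtain ⟨μ, hm⟩ : ∃ μ, n - k = μ + 2 := ⟨n - k - 2, by omega⟩
  set h := g.reverse with hh
  have hhs : h.Splits := splits_reverse g hgs
  have hhd : h.natDegree ≤ μ + 2 := (reverse_natDegree_le g).trans (by rw [hgd, hm])
  set sP := derivative^[μ] h with hsP
  have hss : sP.Splits := splits_iterate_derivative h hhs μ
  have hsd : sP.natDegree ≤ 2 := (natDegree_iterate_derivative h μ).trans (by omega)
  have hcoeffh : ∀ j, j ≤ μ + 2 → h.coeff j = g.coeff (μ + 2 - j) := by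
    intro j hj
    rw [hh, coeff_reverse, hgd, hm, revAt_le hj]
  have hg0 : g.coeff 0 = (k.descFactorial k : ℝ) * f.coeff k := by
    rw [hg, coeff_iterate_derivative, nsmul_eq_mul, Nat.zero_add]
  have hg1 : g.coeff 1 = ((k+1).descFactorial k : ℝ) * f.coeff (k+1) := by
    rw [hg, coeff_iterate_derivative, nsmul_eq_mul]
    norm_num [Nat.add_comm]
  have hg2 : g.coeff 2 = ((k+2).descFactorial k : ℝ) * f.coeff (k+2) := by
    rw [hg, coeff_iterate_derivative, nsmul_eq_mul]
    norm_num [Nat.add_comm]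
  have hs0 : sP.coeff 0 = (μ.descFactorial μ : ℝ) * (((k+2).descFactorial k : ℝ) * f.coeff (k+2)) := by
    rw [hsP, coeff_iterate_derivative, nsmul_eq_mul, Nat.zero_add,
      hcoeffh μ (by omega), show μ + 2 - μ = 2 from by omega, hg2]
  have hs1 : sP.coeff 1 = ((μ+1).descFactorial μ : ℝ) * (((k+1).descFactorial k : ℝ) * f.coeff (k+1)) := by
    rw [hsP, coeff_iterate_derivative, nsmul_eq_mul,
      show 1 + μ = μ + 1 from by omega,
      hcoeffh (μ+1) (by omega), show μ + 2 - (μ+1) = 1 from by omega, hg1]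
  have hs2 : sP.coeff 2 = ((μ+2).descFactorial μ : ℝ) * ((k.descFactorial k : ℝ) * f.coeff k) := by
    rw [hsP, coeff_iterate_derivative, nsmul_eq_mul,
      show 2 + μ = μ + 2 from by omega,
      hcoeffh (μ+2) (by omega), show μ + 2 - (μ+2) = 0 from by omega, hg0]
  have disc := discrim_of_splits sP hss hsd
  rw [hs0, hs1, hs2] at disc
  -- abbreviations
  set A := (μ.descFactorial μ : ℝ) with hA
  set B := ((μ+1).descFactorial μ : ℝ) with hB
  set Cc := ((μ+2).descFactorial μ : ℝ) with hCc
  set K0 := (k.descFactorial k : ℝ) with hK0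
  set K1 := ((k+1).descFactorial k : ℝ) with hK1
  set K2 := ((k+2).descFactorial k : ℝ) with hK2
  set a0 := f.coeff k
  set a1 := f.coeff (k+1)
  set a2 := f.coeff (k+2)
  -- descFactorial identities
  have nB : (μ+1).descFactorial μ = (μ+1) * μ.descFactorial μ := by
    have h1 := Nat.succ_descFactorial_succ μ μ
    have h2 := Nat.descFactorial_succ (μ+1) μ
    simp only [Nat.add_sub_cancel_left, one_mul] at h2
    omega
  have nC : 2 * (μ+2).descFactorial μ = (μ+2) * (μ+1).descFactorial μ := by
    have h1 := Nat.succ_descFactorial_succ (μ+1) μ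
    rw [show μ+1+1 = μ+2 from by omega] at h1
    have h2 := Nat.descFactorial_succ (μ+2) μ
    have h3 : μ + 2 - μ = 2 := by omega
    rw [h3] at h2
    omega
  have nK1 : (k+1).descFactorial k = (k+1) * k.descFactorial k := by
    have h1 := Nat.succ_descFactorial_succ k k
    have h2 := Nat.descFactorial_succ (k+1) k
    simp only [Nat.add_sub_cancel_left, one_mul] at h2
    omega
  have nK2 : 2 * (k+2).descFactorial k = (k+2) * (k+1).descFactorial k := by
    have h1 := Nat.succ_descFactorial_succ (k+1) k
    rw [show k+1+1 = k+2 from by omega] at h1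
    have h2 := Nat.descFactorial_succ (k+2) k
    have h3 : k + 2 - k = 2 := by omega
    rw [h3] at h2
    omega
  have rB : B = ((μ:ℝ)+1) * A := by rw [hB, hA, nB]; push_cast; ring
  have rC : 2 * Cc = ((μ:ℝ)+2) * B := by rw [hCc, hB, ← Nat.cast_ofNat, ← Nat.cast_mul, nC]; push_cast; ring
  have rK1 : K1 = ((k:ℝ)+1) * K0 := by rw [hK1, hK0, nK1]; push_cast; ring
  have rK2 : 2 * K2 = ((k:ℝ)+2) * K1 := by rw [hK2, hK1, ← Nat.cast_ofNat, ← Nat.cast_mul, nK2]; push_cast; ring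
  have hApos : 0 < A := by
    rw [hA]
    exact_mod_cast Nat.pos_of_ne_zero (fun hz => by simpa [Nat.descFactorial_eq_zero_iff_lt] using hz)
  have hK0pos : 0 < K0 := by
    rw [hK0]
    exact_mod_cast Nat.pos_of_ne_zero (fun hz => by simpa [Nat.descFactorial_eq_zero_iff_lt] using hz)
  -- rewrite goal
  have hnk : (f.natDegree : ℝ) - k = (μ:ℝ) + 2 := by
    rw [← hn, show (n:ℝ) - (k:ℝ) = ((n - k : ℕ) : ℝ) from by
      rw [Nat.cast_sub (by omega)], hm]
    push_cast; ring
  rw [hnk]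
  have disc4 := mul_le_mul_of_nonneg_left disc (by norm_num : (0:ℝ) ≤ 4)
  have e1 : 4 * (4*((Cc*(K0*a0))*(A*(K2*a2)))) = (2*Cc)*((2*K2)*((4*(K0*A))*(a0*a2))) := by ring
  rw [e1, rC, rK2, rB, rK1] at disc4
  have hcpos : (0:ℝ) < 4*(((μ:ℝ)+1) * ((k:ℝ)+1) * A^2 * K0^2) := by positivity
  apply le_of_mul_le_mul_right _ hcpos
  calc ((k:ℝ)+2) * ((μ:ℝ)+2) * (a0 * a2) * (4*(((μ:ℝ)+1) * ((k:ℝ)+1) * A^2 * K0^2))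
      = (((μ:ℝ)+2)*(((μ:ℝ)+1)*A))*((((k:ℝ)+2)*(((k:ℝ)+1)*K0))*((4*(K0*A))*(a0*a2))) := by ring
    _ ≤ 4*((((μ:ℝ)+1)*A)*((((k:ℝ)+1)*K0)*a1))^2 := disc4
    _ = ((k:ℝ)+1) * (((μ:ℝ)+2) - 1) * a1 ^ 2 * (4*(((μ:ℝ)+1) * ((k:ℝ)+1) * A^2 * K0^2)) := by ring

lemma lemC : ∀ (M : Multiset ℝ), (∀ x ∈ M, 0 ≤ x) →
    (∀ j, 0 ≤ ((M.map (fun l => X + C l)).prod.coeff j)) ∧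
    (∀ j, j < Multiset.card M → 0 < (M.map (fun l => X + C l)).prod.coeff j →
       0 < (M.map (fun l => X + C l)).prod.coeff (j+1)) := by
  intro M
  induction M using Multiset.induction with
  | empty =>
    intro _
    constructor
    · intro j
      rcases j with _ | j <;> simp [coeff_one]
    · intro j hj
      simp at hj
  | cons a s ih =>
    intro hM
    have ha : 0 ≤ a := hM a (Multiset.mem_cons_self a s)
    obtain ⟨ihn, ihc⟩ := ih (fun x hx => hM x (Multiset.mem_cons_of_mem hx))
    set P := (s.map (fun l => X + C l)).prod with hP
    have hprod : ((a ::ₘ s).map (fun l => X + C l)).prod = (X + C a) * P := by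
      rw [Multiset.map_cons, Multiset.prod_cons]
    have hc0 : (((a ::ₘ s).map (fun l => X + C l)).prod).coeff 0 = a * P.coeff 0 := by
      rw [hprod, mul_coeff_zero]
      simp
    have hcs : ∀ i, (((a ::ₘ s).map (fun l => X + C l)).prod).coeff (i+1)
        = P.coeff i + a * P.coeff (i+1) := by
      intro i
      rw [hprod, add_mul, coeff_add, coeff_X_mul, coeff_C_mul]
    constructor
    · intro j
      rcases j with _ | i
      · rw [hc0]; exact mul_nonneg ha (ihn 0)
      · rw [hcs]
        exact add_nonneg (ihn i) (mul_nonneg ha (ihn (i+1)))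
    · intro j hj hpos
      rcases j with _ | i
      · rw [hc0] at hpos
        have hP0 : 0 < P.coeff 0 := by
          rcases mul_pos_iff.1 hpos with ⟨_, h⟩ | ⟨h, _⟩
          · exact h
          · linarith
        rw [hcs]
        exact add_pos_of_pos_of_nonneg hP0 (mul_nonneg ha (ihn 1))
      · rw [hcs] at hpos
        rw [hcs]
        by_cases hPi : 0 < P.coeff i
        · have hi' : i < Multiset.card s := by
            rw [Multiset.card_cons] at hj; omega
          exact add_pos_of_pos_of_nonneg (ihc i hi' hPi) (mul_nonneg ha (ihn (i+2)))
        · have h0 : P.coeff i = 0 := le_antisymm (not_lt.1 hPi) (ihn i)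
          rw [h0, zero_add] at hpos
          have : 0 < P.coeff (i+1) := by
            rcases mul_pos_iff.1 hpos with ⟨_, h⟩ | ⟨h, _⟩
            · exact h
            · linarith
          exact add_pos_of_pos_of_nonneg this (mul_nonneg ha (ihn (i+2)))

lemma final_eq (d r : ℕ) (hr1 : 1 ≤ r) (hrd : r < d) (ρ br : ℝ) (hρ : 0 < ρ) :
    (d.choose r : ℝ) * ((r : ℝ) / d) ^ r * (((d - r : ℕ) : ℝ) / d) ^ (d - r) *
      (br * (1 + ρ * ((r:ℝ)/(ρ*((d:ℝ)-r))))^d / (ρ^r * ((r:ℝ)/(ρ*((d:ℝ)-r)))^r))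
    = (d.choose r : ℝ) * br := by
  have hdr : ((d - r : ℕ) : ℝ) = (d:ℝ) - r := by
    rw [Nat.cast_sub hrd.le]
  have hdp : (0:ℝ) < d := by exact_mod_cast Nat.pos_of_ne_zero (by omega)
  have hrp : (0:ℝ) < r := by exact_mod_cast hr1
  have hdrp : (0:ℝ) < (d:ℝ) - r := by
    have : (r:ℝ) < d := by exact_mod_cast hrd
    linarith
  have hρt : ρ * ((r:ℝ)/(ρ*((d:ℝ)-r))) = (r:ℝ)/((d:ℝ)-r) := by
    field_simp
  have h1t : 1 + (r:ℝ)/((d:ℝ)-r) = (d:ℝ)/((d:ℝ)-r) := by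
    field_simp
    ring
  have hpows : ρ^r * ((r:ℝ)/(ρ*((d:ℝ)-r)))^r = ((r:ℝ)/((d:ℝ)-r))^r := by
    rw [← mul_pow, hρt]
  rw [hρt, h1t, hpows, hdr]
  have hsplit : ((d:ℝ)/((d:ℝ)-r))^d = ((d:ℝ)/((d:ℝ)-r))^r * ((d:ℝ)/((d:ℝ)-r))^(d-r) := by
    rw [← pow_add]
    congr 1
    omega
  rw [hsplit]
  have e1 : ((r:ℝ)/d)^r * ((d:ℝ)/((d:ℝ)-r))^r = ((r:ℝ)/((d:ℝ)-r))^r := by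
    rw [← mul_pow]
    congr 1
    field_simp
  have e2 : (((d:ℝ)-r)/d)^(d-r) * ((d:ℝ)/((d:ℝ)-r))^(d-r) = 1 := by
    rw [← mul_pow]
    have : ((d:ℝ)-r)/d * ((d:ℝ)/((d:ℝ)-r)) = 1 := by
      field_simp
    rw [this, one_pow]
  have hne : ((r:ℝ)/((d:ℝ)-r))^r ≠ 0 := by positivity
  have e3 : ((r:ℝ)/d)^r * (((d:ℝ)-r)/d)^(d-r) *
      (((d:ℝ)/((d:ℝ)-r))^r * ((d:ℝ)/((d:ℝ)-r))^(d-r)) = ((r:ℝ)/((d:ℝ)-r))^r := by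
    calc ((r:ℝ)/d)^r * (((d:ℝ)-r)/d)^(d-r) *
        (((d:ℝ)/((d:ℝ)-r))^r * ((d:ℝ)/((d:ℝ)-r))^(d-r))
        = (((r:ℝ)/d)^r * ((d:ℝ)/((d:ℝ)-r))^r) *
            ((((d:ℝ)-r)/d)^(d-r) * ((d:ℝ)/((d:ℝ)-r))^(d-r)) := by ring
      _ = ((r:ℝ)/((d:ℝ)-r))^r := by rw [e1, e2, mul_one]
  calc (d.choose r : ℝ) * ((r:ℝ)/d)^r * (((d:ℝ)-r)/d)^(d-r) *
        (br * (((d:ℝ)/((d:ℝ)-r))^r * ((d:ℝ)/((d:ℝ)-r))^(d-r)) / ((r:ℝ)/((d:ℝ)-r))^r)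
      = (d.choose r : ℝ) * br * ((((r:ℝ)/d)^r * (((d:ℝ)-r)/d)^(d-r) *
          (((d:ℝ)/((d:ℝ)-r))^r * ((d:ℝ)/((d:ℝ)-r))^(d-r))) / ((r:ℝ)/((d:ℝ)-r))^r) := by
        ring
    _ = (d.choose r : ℝ) * br * (((r:ℝ)/((d:ℝ)-r))^r / ((r:ℝ)/((d:ℝ)-r))^r) := by rw [e3]
    _ = (d.choose r : ℝ) * br := by rw [div_self hne, mul_one]

lemma F_le_one (d r : ℕ) (hr : r ≤ d) :
    (d.choose r : ℝ) * ((r : ℝ) / d) ^ r * (((d - r : ℕ) : ℝ) / d) ^ (d - r) ≤ 1 := by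
  rcases Nat.eq_zero_or_pos d with hd0 | hdpos
  · subst hd0
    have hr0 : r = 0 := by omega
    subst hr0
    norm_num
  · have hdp : (0:ℝ) < d := by exact_mod_cast hdpos
    have hxy : (r:ℝ)/d + ((d - r : ℕ):ℝ)/d = 1 := by
      rw [Nat.cast_sub hr, ← add_div]
      field_simp
      ring
    have hsum := add_pow ((r:ℝ)/d) (((d - r : ℕ):ℝ)/d) d
    rw [hxy, one_pow] at hsum
    have hmem : r ∈ Finset.range (d+1) := Finset.mem_range.2 (by omega)
    have hterm := Finset.single_le_sum
      (f := fun i => ((r:ℝ)/d)^i * (((d - r : ℕ):ℝ)/d)^(d-i) * (d.choose i : ℝ))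
      (fun i _ => by positivity) hmem
    rw [← hsum] at hterm
    calc (d.choose r : ℝ) * ((r : ℝ) / d) ^ r * (((d - r : ℕ) : ℝ) / d) ^ (d - r)
        = ((r:ℝ)/d)^r * (((d - r : ℕ):ℝ)/d)^(d-r) * (d.choose r : ℝ) := by ring
      _ ≤ 1 := hterm

end Stmt6Aux

set_option maxHeartbeats 2000000 in
open Stmt6Aux in
/-- If `p` is real-rooted with nonnegative coefficients and `deg p ≤ d`, then
`a_r ≥ C(d,r) (r/d)^r ((d-r)/d)^(d-r) · inf_{t>0} p(t)/t^r`. -/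
theorem stmt_6 (d r : ℕ) (p : Polynomial ℝ)
    (hdeg : p.natDegree ≤ d)
    (hroots : ∀ z : ℂ, Polynomial.aeval z p = 0 → z.im = 0)
    (hcoeff : ∀ k, 0 ≤ p.coeff k)
    (hr : r ≤ d) :
    (d.choose r : ℝ) * ((r : ℝ) / d) ^ r * (((d - r : ℕ) : ℝ) / d) ^ (d - r) *
        (⨅ t : Set.Ioi (0 : ℝ), p.eval (t : ℝ) / (t : ℝ) ^ r)
      ≤ p.coeff r := by
  haveI : Nonempty (Set.Ioi (0:ℝ)) := ⟨⟨1, Set.mem_Ioi.2 one_pos⟩⟩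
  set F := (d.choose r : ℝ) * ((r : ℝ) / d) ^ r * (((d - r : ℕ) : ℝ) / d) ^ (d - r) with hFdef
  set cap := ⨅ t : Set.Ioi (0 : ℝ), p.eval (t : ℝ) / (t : ℝ) ^ r with hcapdef
  have hFnn : 0 ≤ F := by rw [hFdef]; positivity
  have hF1 : F ≤ 1 := F_le_one d r hr
  by_cases hp0 : p = 0
  · have hcz : cap = 0 := by
      rw [hcapdef]
      simp only [hp0, eval_zero, zero_div, ciInf_const]
    rw [hcz, mul_zero, hp0]
    simp
  -- basic facts about cap
  have heval : ∀ t : ℝ, p.eval t = ∑ i ∈ Finset.range (d+1), p.coeff i * t^i := by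
    intro t
    exact eval_eq_sum_range' (by omega) t
  have hevalnn : ∀ t : ℝ, 0 ≤ t → 0 ≤ p.eval t := by
    intro t ht
    rw [heval t]
    exact Finset.sum_nonneg (fun i _ => mul_nonneg (hcoeff i) (pow_nonneg ht i))
  have hvalnn : ∀ t : Set.Ioi (0:ℝ), 0 ≤ p.eval (t:ℝ) / (t:ℝ)^r := by
    rintro ⟨t, ht⟩
    have ht' : 0 < t := Set.mem_Ioi.1 ht
    exact div_nonneg (hevalnn t ht'.le) (pow_nonneg ht'.le r)
  have hbdd : BddBelow (Set.range fun t : Set.Ioi (0:ℝ) => p.eval (t:ℝ) / (t:ℝ)^r) := by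
    refine ⟨0, ?_⟩
    rintro x ⟨t, rfl⟩
    exact hvalnn t
  have hcap0 : 0 ≤ cap := le_ciInf hvalnn
  have hcaple : ∀ t : ℝ, 0 < t → cap ≤ p.eval t / t^r := by
    intro t ht
    exact ciInf_le hbdd ⟨t, ht⟩
  have hcapub : ∀ L : ℝ, (∀ ε : ℝ, 0 < ε → ∃ t, 0 < t ∧ p.eval t / t^r ≤ L + ε) → cap ≤ L := by
    intro L h
    apply le_of_forall_sub_le
    intro ε hε
    obtain ⟨t, ht, hv⟩ := h ε hε
    linarith [hcaple t ht]
  set S := ∑ i ∈ Finset.range (d+1), p.coeff i with hSdef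
  have hS0 : 0 ≤ S := Finset.sum_nonneg (fun i _ => hcoeff i)
  have hSbig : ∀ ε : ℝ, 0 < ε → ∃ t : ℝ, 1 ≤ t ∧ S / t ≤ ε := by
    intro ε hε
    refine ⟨max 1 (S/ε + 1), le_max_left _ _, ?_⟩
    have ht1 : (1:ℝ) ≤ max 1 (S/ε + 1) := le_max_left _ _
    have ht0 : (0:ℝ) < max 1 (S/ε + 1) := lt_of_lt_of_le one_pos ht1
    have htS : S/ε + 1 ≤ max 1 (S/ε + 1) := le_max_right _ _
    rw [div_le_iff₀ ht0]
    have hfs : ε * (S/ε) = S := by field_simp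
    nlinarith [mul_le_mul_of_nonneg_left htS hε.le]
  have hSsmall : ∀ ε : ℝ, 0 < ε → ∃ t : ℝ, 0 < t ∧ t ≤ 1 ∧ S * t ≤ ε := by
    intro ε hε
    have hd1 : (0:ℝ) < ε/(S+1) := div_pos hε (by linarith)
    refine ⟨min 1 (ε/(S+1)), lt_min one_pos hd1, min_le_left _ _, ?_⟩
    have htε : min 1 (ε/(S+1)) ≤ ε/(S+1) := min_le_right _ _
    have ht0 : 0 < min 1 (ε/(S+1)) := lt_min one_pos hd1
    calc S * min 1 (ε/(S+1)) ≤ (S+1) * (ε/(S+1)) := by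
          apply mul_le_mul (by linarith) htε ht0.le (by linarith)
      _ = ε := by field_simp
  -- case r = 0
  by_cases hr0 : r = 0
  · subst hr0
    have hub : cap ≤ p.coeff 0 := by
      apply hcapub
      intro ε hε
      obtain ⟨t, ht0, ht1, htε⟩ := hSsmall ε hε
      refine ⟨t, ht0, ?_⟩
      rw [pow_zero, div_one]
      have he : p.eval t = (∑ i ∈ Finset.range d, p.coeff (i+1) * t^(i+1)) + p.coeff 0 * t^0 := by
        rw [heval t, Finset.sum_range_succ']
      have hsum : ∑ i ∈ Finset.range d, p.coeff (i+1) * t^(i+1)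
          ≤ (∑ i ∈ Finset.range d, p.coeff (i+1)) * t := by
        rw [Finset.sum_mul]
        apply Finset.sum_le_sum
        intro i _
        have hpow : t^(i+1) ≤ t := by
          simpa using pow_le_pow_of_le_one ht0.le ht1 (show 1 ≤ i+1 by omega)
        exact mul_le_mul_of_nonneg_left hpow (hcoeff (i+1))
      have hsum2 : ∑ i ∈ Finset.range d, p.coeff (i+1) ≤ S := by
        rw [hSdef, Finset.sum_range_succ']
        linarith [hcoeff 0]
      have : (∑ i ∈ Finset.range d, p.coeff (i+1)) * t ≤ S * t :=
        mul_le_mul_of_nonneg_right hsum2 ht0.le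
      rw [he, pow_zero, mul_one]
      linarith
    calc F * cap ≤ cap := mul_le_of_le_one_left hcap0 hF1
      _ ≤ p.coeff 0 := hub
  -- now r ≥ 1
  have hr1 : 1 ≤ r := by omega
  set n := p.natDegree with hndef
  -- structure from real-rootedness
  have hsplit : p.Splits := splits_of_complex_roots_real n p le_rfl hroots
  have hlc : 0 < p.leadingCoeff := lt_of_le_of_ne (hcoeff n) (Ne.symm (leadingCoeff_ne_zero.2 hp0))
  have hrootsnp : ∀ u ∈ p.roots, u ≤ 0 := by
    intro u hu
    by_contra hpos
    push_neg at hpos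
    have hroot : p.eval u = 0 := (isRoot_of_mem_roots hu)
    have : 0 < p.eval u := by
      rw [eval_eq_sum_range' (show p.natDegree < n + 1 by omega) u]
      have hterm : 0 < p.coeff n * u^n := mul_pos hlc (pow_pos hpos n)
      have hle := Finset.single_le_sum
        (f := fun i => p.coeff i * u^i)
        (fun i _ => mul_nonneg (hcoeff i) (pow_nonneg hpos.le i))
        (Finset.mem_range.2 (show n < n + 1 by omega))
      exact lt_of_lt_of_le hterm hle
    rw [hroot] at this
    exact lt_irrefl 0 this
  set M : Multiset ℝ := p.roots.map (fun x => -x) with hMdef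
  have hMnn : ∀ x ∈ M, 0 ≤ x := by
    intro x hx
    rw [hMdef] at hx
    obtain ⟨u, hu, rfl⟩ := Multiset.mem_map.1 hx
    linarith [hrootsnp u hu]
  have hMcard : Multiset.card M = n := by
    rw [hMdef, Multiset.card_map]
    exact splits_iff_card_roots.1 hsplit
  set P := (M.map (fun l => X + C l)).prod with hPdef
  have hfac : p = C p.leadingCoeff * P := by
    rw [hPdef, hMdef, Multiset.map_map]
    have : ((fun l => X + C l) ∘ fun x => -x) = fun u : ℝ => X - C u := by
      funext u
      simp [sub_eq_add_neg]
    rw [this]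
    exact hsplit.eq_prod_roots
  have hcoeffP : ∀ j, p.coeff j = p.leadingCoeff * P.coeff j := by
    intro j
    conv_lhs => rw [hfac]
    rw [coeff_C_mul]
  obtain ⟨hPnn, hPcasc⟩ := lemC M hMnn
  have hcasc : ∀ i, i < n → 0 < p.coeff i → 0 < p.coeff (i+1) := by
    intro i hi hpos
    rw [hcoeffP] at hpos ⊢
    have hPi : 0 < P.coeff i := by
      rcases mul_pos_iff.1 hpos with ⟨_, h⟩ | ⟨h, _⟩
      · exact h
      · linarith
    exact mul_pos hlc (hPcasc i (by omega) hPi)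
  have finish0 : p.coeff r = 0 → cap ≤ 0 → F * cap ≤ p.coeff r := by
    intro h1 h2
    have hc : cap = 0 := le_antisymm h2 hcap0
    rw [hc, mul_zero, h1]
  -- case n < r
  by_cases hnr : n < r
  · have hc0 : p.coeff r = 0 := coeff_eq_zero_of_natDegree_lt (by omega)
    apply finish0 hc0
    apply hcapub
    intro ε hε
    obtain ⟨t, ht1, htε⟩ := hSbig ε hε
    have ht0 : 0 < t := lt_of_lt_of_le one_pos ht1
    refine ⟨t, ht0, ?_⟩
    have hev : p.eval t ≤ S * t^n := by
      rw [heval t, hSdef, Finset.sum_mul]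
      apply Finset.sum_le_sum
      intro i _
      by_cases hin : i ≤ n
      · exact mul_le_mul_of_nonneg_left (pow_le_pow_right₀ ht1 hin) (hcoeff i)
      · rw [coeff_eq_zero_of_natDegree_lt (show p.natDegree < i by omega)]
        simp
    have h2 : p.eval t / t^r ≤ S / t := by
      rw [div_le_div_iff₀ (by positivity) ht0]
      calc p.eval t * t ≤ S * t^n * t := mul_le_mul_of_nonneg_right hev ht0.le
        _ = S * t^(n+1) := by ring
        _ ≤ S * t^r := mul_le_mul_of_nonneg_left (pow_le_pow_right₀ ht1 (by omega)) hS0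
    linarith
  push_neg at hnr
  -- case coeff r = 0
  by_cases haz : p.coeff r = 0
  · have hlow : ∀ j, j ≤ r → p.coeff j = 0 := by
      intro j hj
      by_contra hne
      have hpos : 0 < p.coeff j := lt_of_le_of_ne (hcoeff j) (Ne.symm hne)
      have hchain : ∀ m, m ≤ r - j → 0 < p.coeff (j + m) := by
        intro m
        induction m with
        | zero => intro _; simpa using hpos
        | succ m ihm =>
          intro hm
          have h1 : 0 < p.coeff (j+m) := ihm (by omega)
          have h2 : j + m < n := by omega
          have := hcasc (j+m) h2 h1
          rw [show j + m + 1 = j + (m+1) from by omega] at this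
          exact this
      have hcr := hchain (r - j) le_rfl
      rw [show j + (r - j) = r from by omega, haz] at hcr
      exact lt_irrefl 0 hcr
    apply finish0 haz
    apply hcapub
    intro ε hε
    obtain ⟨t, ht0, ht1, htε⟩ := hSsmall ε hε
    refine ⟨t, ht0, ?_⟩
    have hev : p.eval t ≤ S * t^(r+1) := by
      rw [heval t, hSdef, Finset.sum_mul]
      apply Finset.sum_le_sum
      intro i _
      by_cases hir : i ≤ r
      · rw [hlow i hir]
        simp
      · exact mul_le_mul_of_nonneg_left
          (pow_le_pow_of_le_one ht0.le ht1 (by omega)) (hcoeff i)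
    have h2 : p.eval t / t^r ≤ S * t := by
      rw [div_le_iff₀ (by positivity)]
      calc p.eval t ≤ S * t^(r+1) := hev
        _ = S * t * t^r := by ring
    linarith
  have haz' : 0 < p.coeff r := lt_of_le_of_ne (hcoeff r) (Ne.symm haz)
  -- case r = n
  by_cases hreq : r = n
  · have hub : cap ≤ p.coeff r := by
      apply hcapub
      intro ε hε
      obtain ⟨t, ht1, htε⟩ := hSbig ε hε
      have ht0 : 0 < t := lt_of_lt_of_le one_pos ht1
      refine ⟨t, ht0, ?_⟩
      obtain ⟨m, hm⟩ : ∃ m, r = m + 1 := ⟨r - 1, by omega⟩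
      have hev : p.eval t ≤ p.coeff r * t^r + S * t^m := by
        have he2 : p.eval t = ∑ i ∈ Finset.range r, p.coeff i * t^i + p.coeff r * t^r := by
          rw [eval_eq_sum_range' (show p.natDegree < r + 1 by omega) t, Finset.sum_range_succ]
        rw [he2]
        have hb : ∑ i ∈ Finset.range r, p.coeff i * t^i ≤ S * t^m := by
          calc ∑ i ∈ Finset.range r, p.coeff i * t^i
              ≤ ∑ i ∈ Finset.range r, p.coeff i * t^m :=
                Finset.sum_le_sum (fun i hi => mul_le_mul_of_nonneg_left
                  (pow_le_pow_right₀ ht1 (by have := Finset.mem_range.1 hi; omega)) (hcoeff i))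
            _ ≤ ∑ i ∈ Finset.range (d+1), p.coeff i * t^m :=
                Finset.sum_le_sum_of_subset_of_nonneg
                  (by intro x hx; simp only [Finset.mem_range] at *; omega)
                  (fun i _ _ => mul_nonneg (hcoeff i) (pow_nonneg ht0.le m))
            _ = S * t^m := by rw [hSdef, Finset.sum_mul]
        linarith
      have h2 : p.eval t / t^r ≤ p.coeff r + S / t := by
        rw [div_le_iff₀ (by positivity)]
        have he3 : (p.coeff r + S/t) * t^r = p.coeff r * t^r + S * t^m := by
          rw [hm, pow_succ]
          field_simp
        rw [he3]
        exact hev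
      linarith
    calc F * cap ≤ cap := mul_le_of_le_one_left hcap0 hF1
      _ ≤ p.coeff r := hub
  have hrltn : r < n := by omega
  have hrd : r < d := by omega
  set b : ℕ → ℝ := fun j => p.coeff j / (d.choose j : ℝ) with hbdef
  have hbnn : ∀ j, 0 ≤ b j := fun j => div_nonneg (hcoeff j) (Nat.cast_nonneg _)
  have hchoosepos : ∀ j, j ≤ d → (0:ℝ) < (d.choose j : ℝ) := fun j hj => by
    exact_mod_cast Nat.choose_pos hj
  have hcoeffb : ∀ j, j ≤ d → p.coeff j = (d.choose j : ℝ) * b j := by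
    intro j hj
    have hne : (d.choose j : ℝ) ≠ 0 := ne_of_gt (hchoosepos j hj)
    simp only [hbdef]
    rw [mul_comm, div_mul_cancel₀ _ hne]
  have hbzero : ∀ j, n < j → b j = 0 := by
    intro j hj
    simp only [hbdef]
    rw [coeff_eq_zero_of_natDegree_lt (show p.natDegree < j from hj), zero_div]
  have hcpos' : ∀ m, r + m ≤ n → 0 < p.coeff (r + m) := by
    intro m
    induction m with
    | zero => intro _; simpa using haz'
    | succ m ihm =>
      intro hm
      have h1 : 0 < p.coeff (r+m) := ihm (by omega)
      have := hcasc (r+m) (by omega) h1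
      rw [show r + m + 1 = r + (m+1) from by omega] at this
      exact this
  have hcpos : ∀ j, r ≤ j → j ≤ n → 0 < p.coeff j := by
    intro j h1 h2
    have := hcpos' (j - r) (by omega)
    rw [show r + (j - r) = j from by omega] at this
    exact this
  have hbpos : ∀ j, r ≤ j → j ≤ n → 0 < b j := fun j h1 h2 =>
    div_pos (hcpos j h1 h2) (hchoosepos j (by omega))
  have hbrpos : 0 < b r := hbpos r le_rfl (by omega)
  have hulc : ∀ k, k + 2 ≤ d → b k * b (k+2) ≤ b (k+1)^2 := by
    intro k hk
    by_cases hkn : k + 2 ≤ n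
    · have hN := newton p hsplit k (by omega)
      have hCk := hchoosepos k (by omega)
      have hCk1 := hchoosepos (k+1) (by omega)
      have hCk2 := hchoosepos (k+2) (by omega)
      simp only [hbdef]
      rw [div_mul_div_comm, div_pow, div_le_div_iff₀ (by positivity) (by positivity)]
      have haa : 0 ≤ p.coeff k * p.coeff (k+2) := mul_nonneg (hcoeff k) (hcoeff (k+2))
      have hnk1 : (0:ℝ) < (n:ℝ) - k - 1 := by
        have : (k:ℝ) + 2 ≤ (n:ℝ) := by exact_mod_cast hkn
        linarith
      have hnd : (n:ℝ) ≤ (d:ℝ) := by exact_mod_cast hdeg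
      have hkd : (k:ℝ) + 2 ≤ (d:ℝ) := by exact_mod_cast hk
      have step1 : ((k:ℝ)+2)*((d:ℝ)-k)*(p.coeff k * p.coeff (k+2))
          ≤ ((k:ℝ)+1)*((d:ℝ)-k-1)*(p.coeff (k+1))^2 := by
        have hmul : ((k:ℝ)+2)*((d:ℝ)-k)*(p.coeff k * p.coeff (k+2))*((n:ℝ)-k-1)
            ≤ ((k:ℝ)+1)*((d:ℝ)-k-1)*(p.coeff (k+1))^2*((n:ℝ)-k-1) := by
          have hA : ((d:ℝ)-k)*((n:ℝ)-k-1) ≤ ((n:ℝ)-k)*((d:ℝ)-k-1) := by nlinarith [hnd]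
          have h2 : (((d:ℝ)-k)*((n:ℝ)-k-1)) * (((k:ℝ)+2)*(p.coeff k*p.coeff (k+2)))
              ≤ (((n:ℝ)-k)*((d:ℝ)-k-1)) * (((k:ℝ)+2)*(p.coeff k*p.coeff (k+2))) :=
            mul_le_mul_of_nonneg_right hA (mul_nonneg (by positivity) haa)
          have hdk1 : (0:ℝ) ≤ (d:ℝ)-k-1 := by linarith
          have h4 := mul_le_mul_of_nonneg_left hN hdk1
          calc ((k:ℝ)+2)*((d:ℝ)-k)*(p.coeff k * p.coeff (k+2))*((n:ℝ)-k-1)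
              = (((d:ℝ)-k)*((n:ℝ)-k-1)) * (((k:ℝ)+2)*(p.coeff k*p.coeff (k+2))) := by ring
            _ ≤ (((n:ℝ)-k)*((d:ℝ)-k-1)) * (((k:ℝ)+2)*(p.coeff k*p.coeff (k+2))) := h2
            _ = ((d:ℝ)-k-1) * (((k:ℝ)+2)*((n:ℝ)-k)*(p.coeff k*p.coeff (k+2))) := by ring
            _ ≤ ((d:ℝ)-k-1) * (((k:ℝ)+1)*((n:ℝ)-k-1)*(p.coeff (k+1))^2) := h4
            _ = ((k:ℝ)+1)*((d:ℝ)-k-1)*(p.coeff (k+1))^2*((n:ℝ)-k-1) := by ring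
        exact le_of_mul_le_mul_right hmul hnk1
      have c1 : (d.choose (k+1) : ℝ) * ((k:ℝ)+1) = (d.choose k : ℝ) * ((d:ℝ)-k) := by
        have hnat := Nat.choose_succ_right_eq d k
        have hcast : ((d.choose (k+1) : ℕ) : ℝ) * (((k:ℕ)+1 : ℕ) : ℝ)
            = ((d.choose k : ℕ) : ℝ) * (((d - k : ℕ) : ℕ) : ℝ) := by
          exact_mod_cast congrArg (fun x : ℕ => (x : ℝ)) hnat
        rw [Nat.cast_sub (show k ≤ d by omega)] at hcast
        push_cast at hcast ⊢
        linarith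
      have c2 : (d.choose (k+2) : ℝ) * ((k:ℝ)+2) = (d.choose (k+1) : ℝ) * ((d:ℝ)-k-1) := by
        have hnat := Nat.choose_succ_right_eq d (k+1)
        have hcast : ((d.choose (k+2) : ℕ) : ℝ) * (((k:ℕ)+2 : ℕ) : ℝ)
            = ((d.choose (k+1) : ℕ) : ℝ) * (((d - (k+1) : ℕ) : ℕ) : ℝ) := by
          exact_mod_cast congrArg (fun x : ℕ => (x : ℝ)) hnat
        rw [Nat.cast_sub (show k + 1 ≤ d by omega)] at hcast
        push_cast at hcast ⊢
        linarith
      have hpos2 : (0:ℝ) < ((k:ℝ)+1)*((k:ℝ)+2) := by positivity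
      apply le_of_mul_le_mul_right _ hpos2
      calc p.coeff k * p.coeff (k+2) * ((d.choose (k+1):ℝ))^2 * (((k:ℝ)+1)*((k:ℝ)+2))
          = ((d.choose (k+1):ℝ) * ((k:ℝ)+1)) *
              ((d.choose (k+1):ℝ) * ((p.coeff k * p.coeff (k+2)) * ((k:ℝ)+2))) := by ring
        _ = ((d.choose k:ℝ) * ((d:ℝ)-k)) *
              ((d.choose (k+1):ℝ) * ((p.coeff k * p.coeff (k+2)) * ((k:ℝ)+2))) := by rw [c1]
        _ = (((k:ℝ)+2)*((d:ℝ)-k)*(p.coeff k * p.coeff (k+2))) *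
              ((d.choose k:ℝ) * (d.choose (k+1):ℝ)) := by ring
        _ ≤ (((k:ℝ)+1)*((d:ℝ)-k-1)*(p.coeff (k+1))^2) *
              ((d.choose k:ℝ) * (d.choose (k+1):ℝ)) :=
            mul_le_mul_of_nonneg_right step1 (by positivity)
        _ = ((d.choose (k+1):ℝ) * ((d:ℝ)-k-1)) *
              ((d.choose k:ℝ) * ((p.coeff (k+1))^2 * ((k:ℝ)+1))) := by ring
        _ = ((d.choose (k+2):ℝ) * ((k:ℝ)+2)) *
              ((d.choose k:ℝ) * ((p.coeff (k+1))^2 * ((k:ℝ)+1))) := by rw [c2]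
        _ = (p.coeff (k+1))^2 * ((d.choose k:ℝ) * (d.choose (k+2):ℝ)) *
              (((k:ℝ)+1)*((k:ℝ)+2)) := by ring
    · have hz : b (k+2) = 0 := hbzero (k+2) (by omega)
      rw [hz, mul_zero]
      positivity
  set ρ := b (r+1) / b r with hρdef
  have hρpos : 0 < ρ := div_pos (hbpos (r+1) (by omega) (by omega)) hbrpos
  have hbcasc : ∀ i, i < n → 0 < b i → 0 < b (i+1) := by
    intro i hi hbi
    have hci : 0 < p.coeff i := by
      by_contra hc
      push_neg at hc
      have hz : p.coeff i = 0 := le_antisymm hc (hcoeff i)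
      simp only [hbdef, hz, zero_div] at hbi
      exact lt_irrefl 0 hbi
    exact div_pos (hcasc i hi hci) (hchoosepos (i+1) (by omega))
  have hU : ∀ m, r + m ≤ d → b (r+m+1) ≤ ρ * b (r+m) := by
    intro m
    induction m with
    | zero =>
      intro _
      have hq : ρ * b r = b (r+1) := div_mul_cancel₀ _ (ne_of_gt hbrpos)
      simpa using hq.ge
    | succ m ihm =>
      intro hm
      by_cases hn1 : n ≤ r + m + 1
      · rw [show r+(m+1)+1 = r+m+2 from by omega, hbzero (r+m+2) (by omega),
          show r+(m+1) = r+m+1 from by omega]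
        exact mul_nonneg hρpos.le (hbnn _)
      · push_neg at hn1
        have hA : 0 < b (r+m) := hbpos (r+m) (by omega) (by omega)
        have hIH : b (r+m+1) ≤ ρ * b (r+m) := ihm (by omega)
        have hulc' := hulc (r+m) (by omega)
        have hB := hbnn (r+m+1)
        have hC := hbnn (r+m+2)
        rw [show r+(m+1)+1 = r+m+2 from by omega, show r+(m+1) = r+m+1 from by omega]
        nlinarith [mul_le_mul_of_nonneg_left hIH hB, hulc', hA]
  have hUp : ∀ m, r + m ≤ d → b (r+m) ≤ b r * ρ^m := by
    intro m
    induction m with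
    | zero => intro _; simp
    | succ m ihm =>
      intro hm
      have hIH := ihm (by omega)
      have hU' := hU m (by omega)
      calc b (r+(m+1)) = b (r+m+1) := by rw [show r+(m+1) = r+m+1 from by omega]
        _ ≤ ρ * b (r+m) := hU'
        _ ≤ ρ * (b r * ρ^m) := mul_le_mul_of_nonneg_left hIH hρpos.le
        _ = b r * ρ^(m+1) := by rw [pow_succ]; ring
  have hD : ∀ m, m + 1 ≤ r → ρ * b (r-1-m) ≤ b (r-m) := by
    intro m
    induction m with
    | zero =>
      intro _
      simp only [Nat.sub_zero]
      have hulc' := hulc (r-1) (by omega)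
      rw [show r-1+1 = r from by omega, show r-1+2 = r+1 from by omega] at hulc'
      rw [hρdef, div_mul_eq_mul_div, div_le_iff₀ hbrpos]
      nlinarith [hulc']
    | succ m ihm =>
      intro hm
      rw [show r-1-(m+1) = r-m-2 from by omega, show r-(m+1) = r-m-1 from by omega]
      have hIH : ρ * b (r-m-1) ≤ b (r-m) := by
        have := ihm (by omega)
        rw [show r-1-m = r-m-1 from by omega] at this
        exact this
      by_cases hz : 0 < b (r-m-1)
      · have hulc' := hulc (r-m-2) (by omega)
        rw [show r-m-2+1 = r-m-1 from by omega, show r-m-2+2 = r-m from by omega] at hulc'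
        have hBm : 0 < b (r-m) := lt_of_lt_of_le (mul_pos hρpos hz) hIH
        nlinarith [hulc', hbnn (r-m-2), mul_le_mul_of_nonneg_left hIH (hbnn (r-m-1))]
      · have hXz : b (r-m-1) = 0 := le_antisymm (not_lt.1 hz) (hbnn _)
        have hWz : b (r-m-2) = 0 := by
          by_contra hW
          have hWpos : 0 < b (r-m-2) := lt_of_le_of_ne (hbnn _) (Ne.symm hW)
          have := hbcasc (r-m-2) (by omega) hWpos
          rw [show r-m-2+1 = r-m-1 from by omega] at this
          exact hz this
        rw [hWz, hXz, mul_zero]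
  have hDown : ∀ m, m ≤ r → b (r-m) * ρ^m ≤ b r := by
    intro m
    induction m with
    | zero => intro _; simp
    | succ m ihm =>
      intro hm
      have hIH := ihm (by omega)
      have hD' := hD m (by omega)
      calc b (r-(m+1)) * ρ^(m+1) = (ρ * b (r-1-m)) * ρ^m := by
            rw [show r-(m+1) = r-1-m from by omega, pow_succ]
            ring
        _ ≤ b (r-m) * ρ^m := mul_le_mul_of_nonneg_right hD' (pow_nonneg hρpos.le m)
        _ ≤ b r := hIH
  have hdom : ∀ i, i ≤ d → p.coeff i * ρ^r ≤ b r * (d.choose i : ℝ) * ρ^i := by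
    intro i hi
    rcases le_or_gt r i with hri | hir
    · have hUi : b i ≤ b r * ρ^(i-r) := by
        have := hUp (i-r) (by omega)
        rw [show r+(i-r) = i from by omega] at this
        exact this
      calc p.coeff i * ρ^r = (d.choose i:ℝ) * b i * ρ^r := by rw [← hcoeffb i hi]
        _ ≤ (d.choose i:ℝ) * (b r * ρ^(i-r)) * ρ^r :=
            mul_le_mul_of_nonneg_right
              (mul_le_mul_of_nonneg_left hUi (Nat.cast_nonneg _)) (pow_nonneg hρpos.le r)
        _ = b r * (d.choose i:ℝ) * (ρ^(i-r) * ρ^r) := by ring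
        _ = b r * (d.choose i:ℝ) * ρ^i := by
            rw [← pow_add, show i-r+r = i from by omega]
    · have hDi : b i * ρ^(r-i) ≤ b r := by
        have := hDown (r-i) (by omega)
        rw [show r-(r-i) = i from by omega] at this
        exact this
      have hpow : ρ^(r-i) * ρ^i = ρ^r := by
        rw [← pow_add]
        congr 1
        omega
      calc p.coeff i * ρ^r = (d.choose i:ℝ) * b i * (ρ^(r-i) * ρ^i) := by
            rw [← hcoeffb i hi, hpow]
        _ = ((d.choose i:ℝ) * ρ^i) * (b i * ρ^(r-i)) := by ring
        _ ≤ ((d.choose i:ℝ) * ρ^i) * b r :=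
            mul_le_mul_of_nonneg_left hDi (by positivity)
        _ = b r * (d.choose i:ℝ) * ρ^i := by ring
  set t := (r:ℝ) / (ρ * ((d:ℝ) - r)) with htdef
  have hdrp : (0:ℝ) < (d:ℝ) - r := by
    have : (r:ℝ) < d := by exact_mod_cast hrd
    linarith
  have hrp : (0:ℝ) < (r:ℝ) := by exact_mod_cast hr1
  have htpos : 0 < t := by
    rw [htdef]
    exact div_pos hrp (mul_pos hρpos hdrp)
  have hsumb : p.eval t * ρ^r ≤ b r * (1 + ρ*t)^d := by
    rw [heval t, Finset.sum_mul]
    have hrhs : b r * (1 + ρ*t)^d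
        = ∑ i ∈ Finset.range (d+1), b r * ((d.choose i:ℝ) * ρ^i) * t^i := by
      rw [add_comm 1 (ρ*t), add_pow (ρ*t) 1 d, Finset.mul_sum]
      apply Finset.sum_congr rfl
      intro i _
      rw [mul_pow, one_pow, mul_one]
      ring
    rw [hrhs]
    apply Finset.sum_le_sum
    intro i hi
    have hid : i ≤ d := by
      have := Finset.mem_range.1 hi
      omega
    calc p.coeff i * t^i * ρ^r = (p.coeff i * ρ^r) * t^i := by ring
      _ ≤ (b r * (d.choose i:ℝ) * ρ^i) * t^i :=
          mul_le_mul_of_nonneg_right (hdom i hid) (pow_nonneg htpos.le i)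
      _ = b r * ((d.choose i:ℝ) * ρ^i) * t^i := by ring
  have hhh : p.eval t / t^r ≤ b r * (1 + ρ*t)^d / (ρ^r * t^r) := by
    rw [div_le_div_iff₀ (by positivity) (by positivity)]
    calc p.eval t * (ρ^r * t^r) = (p.eval t * ρ^r) * t^r := by ring
      _ ≤ (b r * (1+ρ*t)^d) * t^r := mul_le_mul_of_nonneg_right hsumb (by positivity)
      _ = b r * (1+ρ*t)^d * t^r := by ring
  have hfinal : F * (b r * (1 + ρ*t)^d / (ρ^r * t^r)) = (d.choose r:ℝ) * b r := by
    rw [hFdef, htdef]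
    exact final_eq d r hr1 hrd ρ (b r) hρpos
  calc F * cap ≤ F * (p.eval t / t^r) := mul_le_mul_of_nonneg_left (hcaple t htpos) hFnn
    _ ≤ F * (b r * (1 + ρ*t)^d / (ρ^r * t^r)) := mul_le_mul_of_nonneg_left hhh hFnn
    _ = (d.choose r:ℝ) * b r := hfinal
    _ = p.coeff r := (hcoeffb r (by omega)).symm
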